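/- In Γ^p, for all i ≠ j in ℤ/pℤ and all m, n ∈ ℤ/pℤ, the identity σ_{i,m+i}^{-1}·σ_{j,n+i}^{-1}·σ_{i,m+j}·σ_{j,n+j} = 1 holds (indices and second subscripts read modulo p). -/
import Mathlib


/-- The commutator `[g, h] = g⁻¹ h⁻¹ g h`. -/
def pbra {G : Type*} [Group G] (g h : G) : G := g⁻¹ * h⁻¹ * g * h

/-- The relators `α^p, τ^p` of `Γ = ⟨α, τ ∣ α^p, τ^p⟩`. -/
def CpCpRels (p : ℕ) : Set (FreeGroup (Fin 2)) :=
  {FreeGroup.of 0 ^ p, FreeGroup.of 1 ^ p}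

/-- `Γ = ⟨α, τ ∣ α^p, τ^p⟩`, the free product of two cyclic groups of order `p`. -/
def Gam (p : ℕ) : Type := PresentedGroup (CpCpRels p)

instance (p : ℕ) : Group (Gam p) := by unfold Gam; infer_instance

/-- The generator `α` of `Γ`. -/
def αΓ (p : ℕ) : Gam p := PresentedGroup.of 0

/-- The generator `τ` of `Γ`. -/
def τΓ (p : ℕ) : Gam p := PresentedGroup.of 1

/-- `αᵢ ∈ Γ^p`: the element whose `i`-th coordinate is `α`, others trivial. -/
def αt (p : ℕ) (i : ZMod p) : ZMod p → Gam p := Pi.mulSingle i (αΓ p)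

/-- `τᵢ ∈ Γ^p`: the element whose `i`-th coordinate is `τ`, others trivial. -/
def τt (p : ℕ) (i : ZMod p) : ZMod p → Gam p := Pi.mulSingle i (τΓ p)

/-- `σᵢ = τᵢ·α_{i+1}·α_{i+2}²···α_{i+k}^k···α_{i-1}^{p-1} ∈ Γ^p`
(indices mod `p`): the element of `Γ^p` whose `i`-th coordinate is `τ` and
whose `(i+k)`-th coordinate is `α^k` for `1 ≤ k ≤ p-1`. -/
def σg (p : ℕ) (i : ZMod p) : ZMod p → Gam p :=
  fun x => if x = i then τΓ p else αΓ p ^ (x - i).val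

/-- `σ_{i,n} = σᵢ^{αᵢⁿ} = αᵢ⁻ⁿ·σᵢ·αᵢⁿ ∈ Γ^p`, with the exponent `n` read
modulo `p`. -/
def σgn (p : ℕ) (i n : ZMod p) : ZMod p → Gam p :=
  (αt p i ^ n.val)⁻¹ * σg p i * αt p i ^ n.val

lemma alpha_pow_rel (p : ℕ) : αΓ p ^ p = 1 := by
  show (PresentedGroup.of 0 : PresentedGroup (CpCpRels p)) ^ p = 1
  rw [PresentedGroup.of, ← map_pow]
  exact (QuotientGroup.eq_one_iff _).mpr
    (Subgroup.subset_normalClosure (Set.mem_insert _ _))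

lemma alpha_pow_val_add (p : ℕ) [NeZero p] (a b : ZMod p) :
    αΓ p ^ a.val * αΓ p ^ b.val = αΓ p ^ (a + b).val := by
  rw [← pow_add, ZMod.val_add, ← pow_eq_pow_mod _ (alpha_pow_rel p)]

lemma σgn_apply (p : ℕ) (i n x : ZMod p) :
    σgn p i n x = if x = i then (αΓ p ^ n.val)⁻¹ * τΓ p * αΓ p ^ n.val
      else αΓ p ^ (x - i).val := by
  simp only [σgn, σg, αt, Pi.mul_apply, Pi.inv_apply, Pi.pow_apply,
    Pi.mulSingle_apply]
  split <;> simp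

/-- In `Γ^p`, for all `i ≠ j` in `ℤ/pℤ` and all
`m, n ∈ ℤ/pℤ`, one has
`σ_{i,m+i}⁻¹·σ_{j,n+i}⁻¹·σ_{i,m+j}·σ_{j,n+j} = 1`
(indices and second subscripts read modulo `p`). -/
theorem guptaSidki_schreier_relations
    (p : ℕ) (hp : p.Prime) (ho : Odd p)
    (i j m n : ZMod p) (hij : i ≠ j) :
    (σgn p i (m + i))⁻¹ * (σgn p j (n + i))⁻¹ *
      σgn p i (m + j) * σgn p j (n + j) = 1 := by
  haveI : Fact p.Prime := ⟨hp⟩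
  funext x
  simp only [Pi.mul_apply, Pi.inv_apply, Pi.one_apply, σgn_apply]
  rcases eq_or_ne x i with rfl | hxi
  · rw [if_pos rfl, if_neg hij, if_pos rfl, if_neg hij]
    have h1 : αΓ p ^ (m + j).val * αΓ p ^ (x - j).val = αΓ p ^ (m + x).val := by
      rw [alpha_pow_val_add]; ring_nf
    rw [← h1]
    group
  · rw [if_neg hxi, if_neg hxi]
    rcases eq_or_ne x j with rfl | hxj
    · rw [if_pos rfl, if_pos rfl]
      have h1 : αΓ p ^ (n + i).val * αΓ p ^ (x - i).val = αΓ p ^ (n + x).val := by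
        rw [alpha_pow_val_add]; ring_nf
      rw [← h1]
      group
    · rw [if_neg hxj, if_neg hxj]
      have hc : Commute (αΓ p ^ (x - i).val) (αΓ p ^ (x - j).val) :=
        (Commute.refl (αΓ p)).pow_pow _ _
      rw [mul_assoc, hc.eq]
      group
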